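/- Let M be a binary matroid with ground set S, let X be a nonempty independent set in M, and let M^X be the Γ-extension of M. Then r(M^X) = r(M) + 1, where r denotes rank. -/

import Mathlib

open Set
open scoped Classical

/-- A circuit of a matroid: a minimal dependent set. -/
def MatroidCircuit {α : Type*} (M : Matroid α) (C : Set α) : Prop :=
  M.Dep C ∧ ∀ D ⊂ C, ¬ M.Dep D

/-- A cocircuit of a matroid: a circuit of the dual matroid. -/
def MatroidCocircuit {α : Type*} (M : Matroid α) (C : Set α) : Prop :=
  MatroidCircuit M✶ C

/-- The rank of a set in a matroid, as an extended natural number: the supremum of the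
cardinalities of independent subsets of the set. -/
noncomputable def matroidERk {α : Type*} (M : Matroid α) (A : Set α) : ℕ∞ :=
  ⨆ I : {I : Set α // M.Indep I ∧ I ⊆ A}, (I : Set α).encard

/-- The rank of a matroid. -/
noncomputable def matroidERank {α : Type*} (M : Matroid α) : ℕ∞ :=
  matroidERk M M.E

/-- Deletion of a set from a matroid: the restriction to the complement. -/
def matroidDelete {α : Type*} (M : Matroid α) (Y : Set α) : Matroid α :=
  M.restrict (M.E \ Y)

/-- A `k`-separation of a matroid `M`: a partition of the ground set into disjoint sets `A`, `B`
with `min (|A|, |B|) ≥ k` and `r(A) + r(B) - r(M) ≤ k - 1`. -/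
def KSeparation {α : Type*} (M : Matroid α) (k : ℕ) (A B : Set α) : Prop :=
  Disjoint A B ∧ A ∪ B = M.E ∧ (k : ℕ∞) ≤ A.encard ∧ (k : ℕ∞) ≤ B.encard ∧
    matroidERk M A + matroidERk M B ≤ matroidERank M + ((k : ℕ∞) - 1)

/-- For `k ≥ 2`, a matroid is `k`-connected if it has no `(k-1)`-separation. -/
def KConnected {α : Type*} (M : Matroid α) (k : ℕ) : Prop :=
  ∀ A B : Set α, ¬ KSeparation M (k - 1) A B

/-- The relation `e ~ f` iff `e = f` or some circuit contains both `e` and `f`. -/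
def ConnRel {α : Type*} (M : Matroid α) (e f : α) : Prop :=
  e = f ∨ ∃ C, MatroidCircuit M C ∧ e ∈ C ∧ f ∈ C

/-- A component of a matroid: an equivalence class of the relation `ConnRel` on the
ground set. -/
def MatroidComponent {α : Type*} (M : Matroid α) (D : Set α) : Prop :=
  ∃ e ∈ M.E, D = {f ∈ M.E | ConnRel M e f}

/-- A matroid is connected if it has exactly one component. -/
def MatroidConnected {α : Type*} (M : Matroid α) : Prop :=
  ∃! D : Set α, MatroidComponent M D

/-- `M` is the vector matroid over GF(2) of the matrix with column set `S` whose column at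
`e ∈ S` is `A e`: a set is independent iff it is a subset of `S` whose columns are linearly
independent over GF(2). -/
def IsBinaryRep {α ρ : Type*} (M : Matroid α) (S : Set α) (A : α → ρ → ZMod 2) : Prop :=
  M.E = S ∧ ∀ I : Set α, M.Indep I ↔ I ⊆ S ∧ LinearIndependent (ZMod 2) (fun e : I => A e.1)

/-- The columns of the matrix `A^X` of the Γ-extension: for each index `i`, the new column
labelled `g i` agrees with the column of `x i` in the old rows and has entry `1` in the new
row (indexed by `none`), while every old column keeps its entries in the old rows and has
entry `0` in the new row. -/
noncomputable def gammaCols {α ρ ι : Type*} (A : α → ρ → ZMod 2) (x g : ι → α) :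
    α → Option ρ → ZMod 2 := fun e o =>
  if h : ∃ i, g i = e then o.elim 1 (fun r => A (x h.choose) r)
  else o.elim 0 (fun r => A e r)


lemma linIndep_insert_iff {K V ι : Type*} [Field K] [AddCommGroup V] [Module K V]
    {v : ι → V} {s : Set ι} {a : ι} (has : a ∉ s)
    (hs : LinearIndependent K (fun b : s => v b)) :
    LinearIndependent K (fun b : ↥(insert a s) => v b) ↔
      v a ∉ Submodule.span K (v '' s) := by
  have hinj_s : Set.InjOn v s := fun b hb c hc hbc =>
    Subtype.ext_iff.mp (hs.injective (a₁ := ⟨b, hb⟩) (a₂ := ⟨c, hc⟩) hbc)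
  constructor
  · intro h
    have hinj : Set.InjOn v (insert a s) := fun b hb c hc hbc =>
      Subtype.ext_iff.mp (h.injective (a₁ := ⟨b, hb⟩) (a₂ := ⟨c, hc⟩) hbc)
    have hnotin : v a ∉ v '' s := by
      rintro ⟨b, hb, hba⟩
      exact has (hinj (Or.inr hb) (Or.inl rfl) hba ▸ hb)
    exact ((linearIndepOn_insert (K := K) (f := v) has).mp h).2
  · intro hspan
    have hnotin : v a ∉ v '' s := fun hmem => hspan (Submodule.subset_span hmem)
    have hinj : Set.InjOn v (insert a s) := by
      rintro b (rfl | hb) c (rfl | hc) hbc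
      · rfl
      · exact absurd ⟨c, hc, hbc.symm⟩ hnotin
      · exact absurd ⟨b, hb, hbc⟩ hnotin
      · exact hinj_s hb hc hbc
    exact (linearIndepOn_insert (K := K) (f := v) has).mpr ⟨hs, hspan⟩

lemma matroidERank_eq_encard_base {α : Type*} {M : Matroid α} {B : Set α} (hB : M.IsBase B) :
    matroidERank M = B.encard := by
  refine le_antisymm (iSup_le ?_) (le_iSup_of_le ⟨B, hB.indep, hB.subset_ground⟩ le_rfl)
  rintro ⟨I, hI, -⟩
  obtain ⟨B', hB', hIB'⟩ := hI.exists_isBase_superset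
  exact le_trans (encard_mono hIB') (hB'.encard_eq_encard_of_isBase hB).le

noncomputable def extMap (ρ : Type*) : (ρ → ZMod 2) →ₗ[ZMod 2] (Option ρ → ZMod 2) where
  toFun v := fun o => o.elim 0 v
  map_add' u v := by funext o; cases o <;> simp
  map_smul' c v := by funext o; cases o <;> simp

lemma extMap_ker (ρ : Type*) : LinearMap.ker (extMap ρ) = ⊥ := by
  rw [LinearMap.ker_eq_bot']
  intro v hv
  funext r
  exact congrFun hv (some r)

/-- Lemma 2.1(iv): The rank of the Γ-extension `M^X` is `r(M) + 1`. -/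
theorem stmt_7 {α ρ ι : Type*} [Fintype ι] [Nonempty ι]
    (M MX : Matroid α) (S : Set α) (A : α → ρ → ZMod 2) (x g : ι → α)
    (hxinj : Function.Injective x) (hginj : Function.Injective g)
    (hxS : Set.range x ⊆ S) (hdisj : Disjoint S (Set.range g))
    (hXindep : M.Indep (Set.range x))
    (hM : IsBinaryRep M S A)
    (hMX : IsBinaryRep MX (S ∪ Set.range g) (gammaCols A x g)) :
    matroidERank MX = matroidERank M + 1 := by
  classical
  set col := gammaCols A x g with hcol
  -- basic column computations
  have hScol : ∀ e ∈ S, col e = extMap ρ (A e) := by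
    intro e he
    have hne : ¬ ∃ i, g i = e := by
      rintro ⟨i, rfl⟩
      exact hdisj.ne_of_mem he (mem_range_self i) rfl
    funext o
    simp only [hcol, gammaCols, dif_neg hne]
    rfl
  have u : Option ρ → ZMod 2 := fun o => o.elim 1 0
  have hgcol : ∀ i, col (g i) = extMap ρ (A (x i)) + (fun o => o.elim 1 0) := by
    intro i
    have hex : ∃ i', g i' = g i := ⟨i, rfl⟩
    have hch : hex.choose = i := hginj hex.choose_spec
    funext o
    simp only [hcol, gammaCols, dif_pos hex, hch]
    cases o with
    | none => simp [extMap]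
    | some r => simp [extMap]
  obtain ⟨B, hB⟩ := M.exists_isBase
  have hBS : B ⊆ S := hM.1 ▸ hB.subset_ground
  set i₀ : ι := Classical.arbitrary ι with hi₀
  have hgB : g i₀ ∉ B := fun h => hdisj.ne_of_mem (hBS h) (mem_range_self i₀) rfl
  -- linear independence over B
  have hliB_A : LinearIndependent (ZMod 2) (fun e : B => A e.1) := ((hM.2 B).mp hB.indep).2
  have hliB : LinearIndependent (ZMod 2) (fun e : B => col e.1) := by
    have h2 : LinearIndependent (ZMod 2) ((extMap ρ) ∘ fun e : B => A e.1) :=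
      hliB_A.map' (extMap ρ) (extMap_ker ρ)
    have : (fun e : B => col e.1) = (extMap ρ) ∘ fun e : B => A e.1 := by
      funext e; exact hScol e.1 (hBS e.2)
    rw [this]; exact h2
  -- every column of an element of S lies in the span of columns of B
  have hspanA : ∀ e ∈ S, A e ∈ Submodule.span (ZMod 2) (A '' B) := by
    intro e he
    by_cases heB : e ∈ B
    · exact Submodule.subset_span (mem_image_of_mem A heB)
    · have hdep : ¬ M.Indep (insert e B) :=
        (hB.insert_dep ⟨hM.1 ▸ he, heB⟩).not_indep
      have hnotli : ¬ LinearIndependent (ZMod 2) (fun b : ↥(insert e B) => A b.1) := by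
        intro hli
        exact hdep ((hM.2 _).mpr ⟨insert_subset he hBS, hli⟩)
      by_contra hne
      exact hnotli ((linIndep_insert_iff heB hliB_A).mpr hne)
  have hcolspanB : ∀ e ∈ S, col e ∈ Submodule.span (ZMod 2) (col '' B) := by
    intro e he
    have himg : col '' B = (extMap ρ) '' (A '' B) := by
      rw [image_image]
      exact image_congr fun b hb => hScol b (hBS hb)
    rw [hScol e he, himg, Submodule.span_image]
    exact Submodule.mem_map_of_mem (hspanA e he)
  -- col (g i₀) is not in the span of columns of B
  have hev : ∀ w ∈ Submodule.span (ZMod 2) (col '' B), w none = 0 := by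
    intro w hw
    have hle : Submodule.span (ZMod 2) (col '' B) ≤
        LinearMap.ker (LinearMap.proj (R := ZMod 2) (φ := fun _ : Option ρ => ZMod 2) none) := by
      rw [Submodule.span_le]
      rintro _ ⟨b, hb, rfl⟩
      simp only [SetLike.mem_coe, LinearMap.mem_ker, LinearMap.proj_apply]
      rw [hScol b (hBS hb)]
      rfl
    exact hle hw
  have hnotspan : col (g i₀) ∉ Submodule.span (ZMod 2) (col '' B) := by
    intro h
    have := hev _ h
    rw [hgcol i₀] at this
    simp [extMap] at this
  -- B' = insert (g i₀) B is a base of MX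
  set B' : Set α := insert (g i₀) B with hB'def
  have hliB' : LinearIndependent (ZMod 2) (fun e : B' => col e.1) :=
    (linIndep_insert_iff hgB hliB).mpr hnotspan
  have hB'indep : MX.Indep B' :=
    (hMX.2 B').mpr ⟨insert_subset (Or.inr (mem_range_self i₀)) (hBS.trans subset_union_left), hliB'⟩
  have hspanB' : ∀ e ∈ S ∪ Set.range g, col e ∈ Submodule.span (ZMod 2) (col '' B') := by
    have hmono : Submodule.span (ZMod 2) (col '' B) ≤ Submodule.span (ZMod 2) (col '' B') :=
      Submodule.span_mono (image_mono (subset_insert _ _))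
    rintro e (he | ⟨i, rfl⟩)
    · exact hmono (hcolspanB e he)
    · have h1 : col (x i) ∈ Submodule.span (ZMod 2) (col '' B') :=
        hmono (hcolspanB _ (hxS (mem_range_self i)))
      have h2 : col (x i₀) ∈ Submodule.span (ZMod 2) (col '' B') :=
        hmono (hcolspanB _ (hxS (mem_range_self i₀)))
      have h3 : col (g i₀) ∈ Submodule.span (ZMod 2) (col '' B') :=
        Submodule.subset_span (mem_image_of_mem col (mem_insert _ _))
      have heq : col (g i) = col (x i) - col (x i₀) + col (g i₀) := by
        rw [hgcol i, hgcol i₀, hScol _ (hxS (mem_range_self i)), hScol _ (hxS (mem_range_self i₀))]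
        abel
      rw [heq]
      exact Submodule.add_mem _ (Submodule.sub_mem _ h1 h2) h3
  have hbase : MX.IsBase B' := by
    refine hB'indep.isBase_of_forall_insert ?_
    rintro e ⟨heE, heB'⟩ hcon
    have hli : LinearIndependent (ZMod 2) (fun b : ↥(insert e B') => col b.1) :=
      ((hMX.2 _).mp hcon).2
    have heS : e ∈ S ∪ Set.range g := hMX.1 ▸ heE
    exact ((linIndep_insert_iff heB' hliB').mp hli) (hspanB' e heS)
  -- conclude
  rw [matroidERank_eq_encard_base hbase, matroidERank_eq_encard_base hB,
    encard_insert_of_notMem hgB]
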